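/- Let Y be a Banach space, A : ℤ → L(Y) with ‖A(k)‖ ≤ c(k) for real numbers c(k) > 0 satisfying ∑_{v=1}^{∞} c(k−v)⋯c(k−1) < ∞ for every k ∈ ℤ, and let f : ℤ → Y be bounded. Then the series x(k) := f(k−1) + ∑_{j=−∞}^{k−2} A(k−1)⋯A(j+1) f(j) converges absolutely for every k ∈ ℤ, and x satisfies x(k+1) = A(k) x(k) + f(k) for all k ∈ ℤ. -/

import Mathlib

open scoped BigOperators

/-- `opProd A k v = A(k-1) ∘ A(k-2) ∘ ⋯ ∘ A(k-v)` (composition of `v` operators). -/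
def opProd {Y : Type*} [NormedAddCommGroup Y] [NormedSpace ℂ Y]
    (A : ℤ → Y →L[ℂ] Y) (k : ℤ) : ℕ → (Y →L[ℂ] Y)
  | 0 => 1
  | v + 1 => opProd A k v ∘L A (k - ((v : ℤ) + 1))

lemma opProd_norm_le {Y : Type*} [NormedAddCommGroup Y] [NormedSpace ℂ Y]
    (A : ℤ → Y →L[ℂ] Y) (c : ℤ → ℝ) (hcpos : ∀ k, 0 < c k) (hAc : ∀ k, ‖A k‖ ≤ c k)
    (k : ℤ) : ∀ v : ℕ, ‖opProd A k v‖ ≤ ∏ i ∈ Finset.range v, c (k - 1 - (i : ℤ))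
  | 0 => by
      have h1 : ‖(1 : Y →L[ℂ] Y)‖ ≤ 1 := ContinuousLinearMap.norm_id_le
      simpa [opProd] using h1
  | v + 1 => by
      have h1 := opProd_norm_le A c hcpos hAc k v
      have h2 := hAc (k - ((v : ℤ) + 1))
      have he : k - ((v : ℤ) + 1) = k - 1 - (v : ℤ) := by ring
      rw [he] at h2
      calc ‖opProd A k (v + 1)‖
          = ‖opProd A k v ∘L A (k - ((v : ℤ) + 1))‖ := rfl
        _ ≤ ‖opProd A k v‖ * ‖A (k - ((v : ℤ) + 1))‖ := ContinuousLinearMap.opNorm_comp_le _ _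
        _ ≤ (∏ i ∈ Finset.range v, c (k - 1 - (i : ℤ))) * c (k - 1 - (v : ℤ)) := by
              rw [he]
              exact mul_le_mul h1 h2 (norm_nonneg _)
                (Finset.prod_nonneg fun i _ => (hcpos _).le)
        _ = ∏ i ∈ Finset.range (v + 1), c (k - 1 - (i : ℤ)) :=
              (Finset.prod_range_succ _ _).symm

lemma opProd_succ_left {Y : Type*} [NormedAddCommGroup Y] [NormedSpace ℂ Y]
    (A : ℤ → Y →L[ℂ] Y) (k : ℤ) : ∀ v : ℕ, opProd A (k + 1) (v + 1) = A k ∘L opProd A k v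
  | 0 => by
      show opProd A (k + 1) 0 ∘L A (k + 1 - ((0 : ℕ) + 1)) = A k ∘L opProd A k 0
      ext x
      simp [opProd]
  | v + 1 => by
      show opProd A (k + 1) (v + 1) ∘L A (k + 1 - (((v : ℕ) + 1 : ℕ) + 1)) = _
      rw [opProd_succ_left A k v]
      have he : (k + 1 : ℤ) - (((v : ℕ) + 1 : ℕ) + 1) = k - ((v : ℤ) + 1) := by push_cast; ring
      rw [he, ContinuousLinearMap.comp_assoc]
      rfl

theorem stmt4 {Y : Type*} [NormedAddCommGroup Y] [NormedSpace ℂ Y] [CompleteSpace Y]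
    (A : ℤ → Y →L[ℂ] Y) (c : ℤ → ℝ) (hcpos : ∀ k, 0 < c k)
    (hAc : ∀ k, ‖A k‖ ≤ c k)
    (hsum : ∀ k : ℤ, Summable (fun v : ℕ => ∏ i ∈ Finset.range (v + 1), c (k - 1 - (i : ℤ))))
    (f : ℤ → Y) (hf : ∃ M : ℝ, ∀ k : ℤ, ‖f k‖ ≤ M) :
    (∀ k : ℤ, Summable (fun v : ℕ => ‖opProd A k (v + 1) (f (k - 1 - ((v : ℤ) + 1)))‖)) ∧
    (∀ k : ℤ,
      (fun m : ℤ => f (m - 1) + ∑' v : ℕ, opProd A m (v + 1) (f (m - 1 - ((v : ℤ) + 1)))) (k + 1)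
        = A k ((fun m : ℤ =>
            f (m - 1) + ∑' v : ℕ, opProd A m (v + 1) (f (m - 1 - ((v : ℤ) + 1)))) k) + f k) := by
  obtain ⟨M, hM⟩ := hf
  have hM0 : 0 ≤ M := le_trans (norm_nonneg _) (hM 0)
  have h1 : ∀ k : ℤ, Summable (fun v : ℕ => ‖opProd A k (v + 1) (f (k - 1 - ((v : ℤ) + 1)))‖) := by
    intro k
    apply Summable.of_nonneg_of_le (fun v => norm_nonneg _) ?_ ((hsum k).mul_right M)
    intro v
    calc ‖opProd A k (v + 1) (f (k - 1 - ((v : ℤ) + 1)))‖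
        ≤ ‖opProd A k (v + 1)‖ * ‖f (k - 1 - ((v : ℤ) + 1))‖ :=
          ContinuousLinearMap.le_opNorm _ _
      _ ≤ (∏ i ∈ Finset.range (v + 1), c (k - 1 - (i : ℤ))) * M :=
          mul_le_mul (opProd_norm_le A c hcpos hAc k (v + 1)) (hM _) (norm_nonneg _)
            (Finset.prod_nonneg fun i _ => (hcpos _).le)
  refine ⟨h1, fun k => ?_⟩
  set g : ℕ → Y := fun v => A k (opProd A k v (f (k - 1 - (v : ℤ)))) with hg_def
  have hs : Summable (fun v : ℕ => opProd A k (v + 1) (f (k - 1 - ((v : ℤ) + 1)))) :=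
    (h1 k).of_norm
  have hgsucc : ∀ v : ℕ, g (v + 1) = A k (opProd A k (v + 1) (f (k - 1 - ((v : ℤ) + 1)))) := by
    intro v
    simp only [hg_def]
    norm_num
  have hstail : Summable (fun v : ℕ => g (v + 1)) := by
    simp only [hgsucc]
    exact hs.mapL (A k)
  have hg : Summable g := (summable_nat_add_iff 1).mp hstail
  have hterm : ∀ v : ℕ,
      opProd A (k + 1) (v + 1) (f (k + 1 - 1 - ((v : ℤ) + 1))) = g v := by
    intro v
    have he : (k + 1 : ℤ) - 1 - ((v : ℤ) + 1) = k - 1 - (v : ℤ) := by ring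
    rw [he, opProd_succ_left A k v]
    rfl
  simp only []
  have hL : (∑' v : ℕ, opProd A (k + 1) (v + 1) (f (k + 1 - 1 - ((v : ℤ) + 1)))) = ∑' v, g v := by
    exact tsum_congr hterm
  rw [hL, Summable.tsum_eq_zero_add hg]
  have hg0 : g 0 = A k (f (k - 1)) := by simp [hg_def, opProd]
  rw [hg0, map_add, (A k).map_tsum hs]
  simp only [← hgsucc]
  rw [show (k : ℤ) + 1 - 1 = k from by ring]
  abel
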